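/- Let V be a vector space over a field, W a subspace of V, and define the graded vector spaces C_•^{(n)}(V,W) for n ≥ 1 inductively by: C_0^{(1)}(V,W) = V, C_1^{(1)}(V,W) = W, C_i^{(1)}(V,W) = 0 for i ≥ 2; and for n ≥ 2, C_0^{(n)}(V,W) = V^{⊗n} and C_j^{(n)}(V,W) = (C_j^{(n-1)}(V,W) ⊗ V) ⊕ (C_{j-1}^{(n-1)}(V,W) ⊗ W) for j ≥ 1. Then for every n ≥ 1 there exists a graded differential of degree −1 on C_•^{(n)}(V,W) such that the resulting complex has zero homology in every positive degree. -/

import Mathlib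

open scoped TensorProduct

universe u

/-- The graded vector spaces `C_•^{(n)}(V, W)` of the paper:
`Cfam K V W m j = C_j^{(m+1)}(V, W)`.  Thus `C_0^{(1)} = V`, `C_1^{(1)} = W`,
`C_i^{(1)} = 0` for `i ≥ 2`, and for `n ≥ 2`, `C_0^{(n)} = C_0^{(n-1)} ⊗ V`
(so `C_0^{(n)} = V^{⊗n}`) and
`C_j^{(n)} = (C_j^{(n-1)} ⊗ V) ⊕ (C_{j-1}^{(n-1)} ⊗ W)` for `j ≥ 1`. -/
noncomputable def Cfam (K V : Type u) [Field K] [AddCommGroup V] [Module K V]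
    (W : Submodule K V) : ℕ → ℕ → ModuleCat K
  | 0, 0 => ModuleCat.of K V
  | 0, 1 => ModuleCat.of K ↥W
  | 0, _ + 2 => ModuleCat.of K ↥(⊥ : Submodule K V)
  | m + 1, 0 => ModuleCat.of K ((Cfam K V W m 0) ⊗[K] V)
  | m + 1, j + 1 =>
      ModuleCat.of K
        (((Cfam K V W m (j + 1)) ⊗[K] V) × ((Cfam K V W m j) ⊗[K] ↥W))

set_option maxHeartbeats 1600000 in
/-- **Lemma (appendix).**  Let `V` be a vector space over a field `K` and `W` a
subspace of `V`.  For every `n ≥ 1` there exists a graded differential of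
degree `-1` on `C_•^{(n)}(V, W)` (a family of linear maps
`d_j : C_{j+1}^{(n)} → C_j^{(n)}` with `d ∘ d = 0`) such that the resulting
complex has zero homology in every positive degree, i.e.
`ker(d : C_{j+1} → C_j) = im(d : C_{j+2} → C_{j+1})` for every `j ≥ 0`. -/
theorem statement18
    (K V : Type u) [Field K] [AddCommGroup V] [Module K V]
    (W : Submodule K V) (m : ℕ) :
    ∃ d : ∀ j : ℕ, (Cfam K V W m (j + 1) →ₗ[K] Cfam K V W m j),
      (∀ j : ℕ, (d j).comp (d (j + 1)) = 0) ∧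
      (∀ j : ℕ, LinearMap.ker (d j) ≤ LinearMap.range (d (j + 1))) := by
  induction m with
  | zero =>
    refine ⟨fun j => match j with
      | 0 => (W.subtype : (Cfam K V W 0 1 : Type u) →ₗ[K] Cfam K V W 0 0)
      | j + 1 => 0, ?_, ?_⟩
    · intro j
      match j with
      | 0 => ext x; exact map_zero W.subtype
      | j + 1 => ext x; simp
    · intro j
      match j with
      | 0 =>
        intro x hx
        have : x = 0 := by
          have hx' : (W.subtype : (Cfam K V W 0 1 : Type u) →ₗ[K] Cfam K V W 0 0) x = 0 := hx
          exact Subtype.ext hx'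
        exact ⟨0, by simp [this]⟩
      | j + 1 =>
        intro x _
        have : Subsingleton (Cfam K V W 0 (j + 2) : Type u) :=
          (inferInstance : Subsingleton ↥(⊥ : Submodule K V))
        exact ⟨0, by rw [map_zero, Subsingleton.elim (0 : (Cfam K V W 0 (j+2) : Type u)) x]⟩
  | succ m ih =>
    obtain ⟨d, hdd, hex⟩ := ih
    obtain ⟨p, hp⟩ := W.subtype.exists_leftInverse_of_injective W.ker_subtype
    -- exactness of d
    have hexact : ∀ j, Function.Exact (d (j + 1)) (d j) := by
      intro j
      rw [LinearMap.exact_iff]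
      refine le_antisymm (hex j) ?_
      rintro y ⟨x, rfl⟩
      have := congrFun (congrArg DFunLike.coe (hdd j)) x
      simpa using this
    have hV : ∀ j, Function.Exact ((d (j+1)).rTensor V) ((d j).rTensor V) :=
      fun j => Module.Flat.rTensor_exact V (hexact j)
    have hW : ∀ j, Function.Exact ((d (j+1)).rTensor ↥W) ((d j).rTensor ↥W) :=
      fun j => Module.Flat.rTensor_exact ↥W (hexact j)
    -- helper commutation lemmas
    have h1' : ∀ j x, (d j).rTensor V ((d (j+1)).rTensor V x) = 0 := by
      intro j x
      rw [← LinearMap.comp_apply, ← LinearMap.rTensor_comp, hdd j]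
      simp
    have h1W : ∀ j x, (d j).rTensor ↥W ((d (j+1)).rTensor ↥W x) = 0 := by
      intro j x
      rw [← LinearMap.comp_apply, ← LinearMap.rTensor_comp, hdd j]
      simp
    have h2' : ∀ j x, (d j).rTensor V (W.subtype.lTensor _ x) =
        W.subtype.lTensor _ ((d j).rTensor ↥W x) := by
      intro j x
      rw [← LinearMap.comp_apply, ← LinearMap.comp_apply,
        LinearMap.rTensor_comp_lTensor, LinearMap.lTensor_comp_rTensor]
    have h3' : ∀ (j : ℕ) x, p.lTensor (Cfam K V W m j) ((d j).rTensor V x) =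
        (d j).rTensor ↥W (p.lTensor _ x) := by
      intro j x
      rw [← LinearMap.comp_apply, ← LinearMap.comp_apply,
        LinearMap.lTensor_comp_rTensor, LinearMap.rTensor_comp_lTensor]
    have h4' : ∀ (j : ℕ) (x : (Cfam K V W m j : Type u) ⊗[K] ↥W),
        p.lTensor (Cfam K V W m j) (W.subtype.lTensor _ x) = x := by
      intro j x
      rw [← LinearMap.comp_apply, ← LinearMap.lTensor_comp, hp, LinearMap.lTensor_id]
      rfl
    refine ⟨fun j => match j with
      | 0 =>
        (((d 0).rTensor V).comp (LinearMap.fst K _ _) +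
          (W.subtype.lTensor (Cfam K V W m 0)).comp (LinearMap.snd K _ _) :
          (Cfam K V W (m+1) 1 : Type u) →ₗ[K] Cfam K V W (m+1) 0)
      | j + 1 =>
        (LinearMap.prod
          (((d (j+1)).rTensor V).comp (LinearMap.fst K _ _) +
            (W.subtype.lTensor (Cfam K V W m (j+1))).comp (LinearMap.snd K _ _))
          (-(((d j).rTensor ↥W).comp (LinearMap.snd K _ _))) :
          (Cfam K V W (m+1) (j+2) : Type u) →ₗ[K] Cfam K V W (m+1) (j+1)), ?_, ?_⟩
    · intro j
      match j with
      | 0 =>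
        apply LinearMap.ext
        rintro ⟨a, b⟩
        show (LinearMap.rTensor V (d 0)) ((LinearMap.rTensor V (d 1)) a
            + (LinearMap.lTensor _ W.subtype) b)
          + (LinearMap.lTensor _ W.subtype) (-((LinearMap.rTensor ↥W (d 0)) b)) = 0
        rw [map_add, map_neg, h1', h2']
        abel
      | j + 1 =>
        apply LinearMap.ext
        rintro ⟨a, b⟩
        show ((LinearMap.rTensor V (d (j+1))) ((LinearMap.rTensor V (d (j+2))) a
            + (LinearMap.lTensor _ W.subtype) b)
          + (LinearMap.lTensor _ W.subtype) (-((LinearMap.rTensor ↥W (d (j+1))) b)),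
          -((LinearMap.rTensor ↥W (d j)) (-((LinearMap.rTensor ↥W (d (j+1))) b)))) = 0
        rw [Prod.mk_eq_zero]
        constructor
        · rw [map_add, map_neg, h1', h2']
          abel
        · rw [map_neg, h1W]; simp
    · intro j
      match j with
      | 0 =>
        rintro ⟨a, b⟩ hx
        have hx' : (d 0).rTensor V a + W.subtype.lTensor _ b = 0 := hx
        have hb : (d 0).rTensor ↥W (p.lTensor _ a) = -b := by
          have h := congrArg (p.lTensor (Cfam K V W m 0)) hx'
          rw [map_add, map_zero, h3', h4'] at h
          linear_combination (norm := module) h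
        set c := a - W.subtype.lTensor _ (p.lTensor _ a) with hc
        have hcker : (d 0).rTensor V c = 0 := by
          rw [hc, map_sub, h2', hb, map_neg, sub_neg_eq_add, hx']
        obtain ⟨a', ha'⟩ := (hV 0 c).mp hcker
        refine ⟨(a', p.lTensor _ a), ?_⟩
        show ((d 1).rTensor V a' + W.subtype.lTensor _ (p.lTensor _ a),
          -((d 0).rTensor ↥W (p.lTensor _ a))) = (a, b)
        rw [ha', hb, neg_neg, hc]
        simp
      | j + 1 =>
        rintro ⟨a, b⟩ hx
        have hx' : ((d (j+1)).rTensor V a + W.subtype.lTensor _ b,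
            -((d j).rTensor ↥W b)) = 0 := hx
        have h1x : (d (j+1)).rTensor V a + W.subtype.lTensor _ b = 0 :=
          congrArg Prod.fst hx'
        have h2x : (d j).rTensor ↥W b = 0 := by
          have := congrArg Prod.snd hx'
          simpa using this
        obtain ⟨b2, hb2⟩ := (hW j b).mp h2x
        set c := a + W.subtype.lTensor _ b2 with hc
        have hcker : (d (j+1)).rTensor V c = 0 := by
          rw [hc, map_add, h2', hb2, h1x]
        obtain ⟨a', ha'⟩ := (hV (j+1) c).mp hcker
        refine ⟨(a', -b2), ?_⟩
        show ((d (j+2)).rTensor V a' + W.subtype.lTensor _ (-b2),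
          -((d (j+1)).rTensor ↥W (-b2))) = (a, b)
        rw [ha', hc, map_neg, map_neg, neg_neg, hb2]
        simp
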